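/- Let M, X, Y be m×m complex matrices satisfying M·X = X, Y·M = Y, and M·Y = X·M. Then rank(X − Y) = rank(colBlock(X, Y)) + rank(rowBlock(X, Y)) − rank(X) − rank(Y), where colBlock(X, Y) is the 2m×m block matrix with X stacked above Y and rowBlock(X, Y) is the m×2m block matrix with X placed to the left of Y. -/

import Mathlib

open Matrix

set_option maxHeartbeats 1000000
set_option synthInstance.maxHeartbeats 400000

/-- If `M * X = X`, `Y * M = Y` and `M * Y = X * M`, then
`rank (X - Y) = rank [X; Y] + rank [X, Y] - rank X - rank Y`. -/
theorem stmt_0 (m : ℕ) (M X Y : Matrix (Fin m) (Fin m) ℂ)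
    (h1 : M * X = X) (h2 : Y * M = Y) (h3 : M * Y = X * M) :
    ((X - Y).rank : ℤ) =
      ((Matrix.fromRows X Y).rank : ℤ) + ((Matrix.fromCols X Y).rank : ℤ)
        - (X.rank : ℤ) - (Y.rank : ℤ) := by
  classical
  set D := X - Y with hDdef
  set kX := LinearMap.ker X.mulVecLin with hkX
  set kY := LinearMap.ker Y.mulVecLin with hkY
  set rX := LinearMap.range X.mulVecLin with hrX
  set rY := LinearMap.range Y.mulVecLin with hrY
  have hfin : Module.finrank ℂ (Fin m → ℂ) = m := Module.finrank_fin_fun ℂ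
  have hDker : ∀ v, v ∈ LinearMap.ker D.mulVecLin ↔ X *ᵥ v = Y *ᵥ v := by
    intro v
    simp only [LinearMap.mem_ker, mulVecLin_apply, hDdef, sub_mulVec, sub_eq_zero]
  -- kernel of the stacked matrix
  have hkerRows : LinearMap.ker (fromRows X Y).mulVecLin = kX ⊓ kY := by
    ext v
    simp only [LinearMap.mem_ker, mulVecLin_apply, fromRows_mulVec, Submodule.mem_inf,
      hkX, hkY]
    constructor
    · intro h
      constructor
      · ext i; exact congrFun h (Sum.inl i)
      · ext i; exact congrFun h (Sum.inr i)
    · rintro ⟨ha, hb⟩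
      ext (i | i)
      · exact congrFun ha i
      · exact congrFun hb i
  -- range of the side-by-side matrix
  have hrangeCols : LinearMap.range (fromCols X Y).mulVecLin = rX ⊔ rY := by
    apply le_antisymm
    · rintro _ ⟨v, rfl⟩
      have hv : v = Sum.elim (v ∘ Sum.inl) (v ∘ Sum.inr) := by
        funext i
        cases i <;> rfl
      have : (fromCols X Y).mulVecLin v =
          X *ᵥ (v ∘ Sum.inl) + Y *ᵥ (v ∘ Sum.inr) := by
        conv_lhs => rw [mulVecLin_apply, hv]
        rw [fromCols_mulVec_sumElim]
      rw [this]
      exact Submodule.add_mem_sup (by exact ⟨v ∘ Sum.inl, rfl⟩)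
        (by exact ⟨v ∘ Sum.inr, rfl⟩)
    · rw [sup_le_iff]
      constructor
      · rintro _ ⟨v, rfl⟩
        exact ⟨Sum.elim v 0, by simp [mulVecLin_apply]⟩
      · rintro _ ⟨v, rfl⟩
        exact ⟨Sum.elim 0 v, by simp [mulVecLin_apply]⟩
  -- the key dimension identity
  set g : LinearMap.ker D.mulVecLin →ₗ[ℂ] (Fin m → ℂ) :=
    X.mulVecLin.domRestrict (LinearMap.ker D.mulVecLin) with hg
  have hrange_g : LinearMap.range g = rX ⊓ rY := by
    apply le_antisymm
    · rintro _ ⟨⟨v, hv⟩, rfl⟩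
      refine ⟨⟨v, rfl⟩, ⟨v, ?_⟩⟩
      simpa [hg, mulVecLin_apply] using ((hDker v).mp hv).symm
    · rintro w ⟨⟨a, rfl⟩, ⟨b, hb⟩⟩
      simp only [mulVecLin_apply] at hb ⊢
      have e1 : X *ᵥ (M *ᵥ b) = X *ᵥ a := by
        rw [mulVec_mulVec, ← h3, ← mulVec_mulVec, hb, mulVec_mulVec, h1]
      have e2 : Y *ᵥ (M *ᵥ b) = X *ᵥ a := by
        rw [mulVec_mulVec, h2, hb]
      refine ⟨⟨M *ᵥ b, (hDker _).mpr (e1.trans e2.symm)⟩, ?_⟩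
      simpa [hg, mulVecLin_apply] using e1
  have hker_g : LinearMap.ker g = Submodule.comap (LinearMap.ker D.mulVecLin).subtype
      (kX ⊓ kY) := by
    ext ⟨v, hv⟩
    simp only [LinearMap.mem_ker, hg, LinearMap.domRestrict_apply, Submodule.mem_comap,
      Submodule.subtype_apply, Submodule.mem_inf, hkX, hkY, mulVecLin_apply]
    constructor
    · intro h
      exact ⟨h, by rw [← (hDker v).mp hv]; exact h⟩
    · exact fun h => h.1
  have hle : kX ⊓ kY ≤ LinearMap.ker D.mulVecLin := by
    intro v hv
    rw [Submodule.mem_inf] at hv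
    obtain ⟨ha, hb⟩ := hv
    rw [hkX, LinearMap.mem_ker, mulVecLin_apply] at ha
    rw [hkY, LinearMap.mem_ker, mulVecLin_apply] at hb
    rw [hDker, ha, hb]
  have hker_g_finrank : Module.finrank ℂ (LinearMap.ker g) =
      Module.finrank ℂ (kX ⊓ kY : Submodule ℂ (Fin m → ℂ)) := by
    rw [hker_g]
    exact (Submodule.comapSubtypeEquivOfLe hle).finrank_eq
  have hkey : Module.finrank ℂ (LinearMap.ker D.mulVecLin) =
      Module.finrank ℂ (rX ⊓ rY : Submodule ℂ (Fin m → ℂ)) +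
      Module.finrank ℂ (kX ⊓ kY : Submodule ℂ (Fin m → ℂ)) := by
    rw [← hker_g_finrank, ← hrange_g]
    exact (LinearMap.finrank_range_add_finrank_ker g).symm
  -- rank-nullity for the individual matrices
  have hD : D.rank + Module.finrank ℂ (LinearMap.ker D.mulVecLin) = m := by
    rw [Matrix.rank]
    have h := LinearMap.finrank_range_add_finrank_ker D.mulVecLin
    rwa [hfin] at h
  have hX : X.rank + Module.finrank ℂ (kX : Submodule ℂ (Fin m → ℂ)) = m := by
    rw [Matrix.rank, hkX]
    have h := LinearMap.finrank_range_add_finrank_ker X.mulVecLin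
    rwa [hfin] at h
  have hY : Y.rank + Module.finrank ℂ (kY : Submodule ℂ (Fin m → ℂ)) = m := by
    rw [Matrix.rank, hkY]
    have h := LinearMap.finrank_range_add_finrank_ker Y.mulVecLin
    rwa [hfin] at h
  have hRows : (fromRows X Y).rank +
      Module.finrank ℂ (kX ⊓ kY : Submodule ℂ (Fin m → ℂ)) = m := by
    rw [Matrix.rank, ← hkerRows]
    have h := LinearMap.finrank_range_add_finrank_ker (fromRows X Y).mulVecLin
    rwa [hfin] at h
  have hCols : (fromCols X Y).rank =
      Module.finrank ℂ (rX ⊔ rY : Submodule ℂ (Fin m → ℂ)) := by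
    rw [Matrix.rank, hrangeCols]
  have hsupinf : Module.finrank ℂ (rX ⊔ rY : Submodule ℂ (Fin m → ℂ)) +
      Module.finrank ℂ (rX ⊓ rY : Submodule ℂ (Fin m → ℂ)) = X.rank + Y.rank := by
    rw [Matrix.rank, Matrix.rank, ← hrX, ← hrY]
    exact Submodule.finrank_sup_add_finrank_inf_eq rX rY
  omega
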